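/- arXiv:1909.12043 — 4 statements merged into one kernel-verified Lean document; each statement's English description precedes it below -/
import Mathlib

section
/- Let G be a finite non-solvable group with solvable radical Sol(G), and let x ∈ G \ Sol(G). Then the set of neighbors of x in the non-solvable graph, N(x) = {y ∈ G \ Sol(G) : y ≠ x and ⟨x,y⟩ is not solvable}, is a union of cosets of Sol(G); in particular |Sol(G)| divides |N(x)|. -/
open Subgroup

def solvabilizer {G : Type*} [Group G] (x : G) : Set G :=
  {g | IsSolvable (closure ({g, x} : Set G))}

def solSet (G : Type*) [Group G] : Set G :=
  {x | ∀ y : G, IsSolvable (closure ({x, y} : Set G))}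

/-- `R` is the solvable radical of `G`: the largest solvable normal subgroup. -/
def IsSolvableRadical {G : Type*} [Group G] (R : Subgroup G) : Prop :=
  IsSolvable R ∧ R.Normal ∧ ∀ N : Subgroup G, N.Normal → IsSolvable N → N ≤ R

/-- The non-solvable graph: vertices are elements outside the solvable radical `R`,
two distinct vertices adjacent iff they generate a non-solvable subgroup. -/
def nonSolvableGraph (G : Type*) [Group G] (R : Subgroup G) :
    SimpleGraph {x : G // x ∉ R} where
  Adj a b := a ≠ b ∧ ¬ IsSolvable (closure ({(a : G), (b : G)} : Set G))
  symm := by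
    constructor
    rintro a b ⟨h1, h2⟩
    exact ⟨h1.symm, by rwa [Set.pair_comm]⟩
  loopless := by constructor; rintro a ⟨h1, _⟩; exact h1 rfl

/-- Neighborhood of `x` in the non-solvable graph, as a subset of `G`. -/
def nsNbhd {G : Type*} [Group G] (R : Subgroup G) (x : G) : Set G :=
  {y | y ∉ R ∧ y ≠ x ∧ ¬ IsSolvable (closure ({x, y} : Set G))}

/-- Neighborhood of `x` in the non-solvable graph where the solvable elements are
described by `solSet`. -/
def nsNbhdSet {G : Type*} [Group G] (x : G) : Set G :=
  {y | y ∉ solSet G ∧ y ≠ x ∧ ¬ IsSolvable (closure ({x, y} : Set G))}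

/-- Preimage under the quotient map of a solvable subgroup is solvable,
given that the (normal) kernel is solvable. -/
lemma comap_mk'_solvable {G : Type*} [Group G] (R : Subgroup G) [R.Normal]
    (hRs : IsSolvable R) (S : Subgroup (G ⧸ R)) (hS : IsSolvable S) :
    IsSolvable (comap (QuotientGroup.mk' R) S) := by
  haveI : Group.IsSolvable R := hRs; haveI : Group.IsSolvable S := hS
  set H := comap (QuotientGroup.mk' R) S with hH
  have hRle : R ≤ H := by
    intro r hr
    show QuotientGroup.mk' R r ∈ S
    rw [show QuotientGroup.mk' R r = 1 from (QuotientGroup.eq_one_iff r).mpr hr]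
    exact S.one_mem
  let f : R →* H := Subgroup.inclusion hRle
  let g : H →* S := ((QuotientGroup.mk' R).comp H.subtype).codRestrict S (fun h => h.2)
  apply solvable_of_ker_le_range f g
  intro a ha
  have h1 : ((a : G) : G ⧸ R) = 1 := by
    have := congrArg Subtype.val (ha : g a = 1)
    exact this
  exact ⟨⟨a, (QuotientGroup.eq_one_iff _).mp h1⟩, rfl⟩

/-- If `b` and `c` have the same image mod `R`, solvability of `⟨a,c⟩` gives
solvability of `⟨a,b⟩`. -/
lemma solvable_transfer {G : Type*} [Group G] (R : Subgroup G) [R.Normal]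
    (hRs : IsSolvable R) (a b c : G) (hbc : (b : G ⧸ R) = (c : G ⧸ R))
    (h : IsSolvable (closure ({a, c} : Set G))) :
    IsSolvable (closure ({a, b} : Set G)) := by
  set π := QuotientGroup.mk' R with hπ
  set S : Subgroup (G ⧸ R) := closure ({((a : G) : G ⧸ R), ((c : G) : G ⧸ R)} : Set (G ⧸ R)) with hSdef
  have hS : IsSolvable S := by
    have hmap : map π (closure ({a, c} : Set G)) = S := by
      rw [MonoidHom.map_closure]
      congr 1
      simp [Set.image_insert_eq, hπ]
    rw [← hmap]
    haveI : Group.IsSolvable (closure ({a, c} : Set G)) := h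
    exact solvable_of_surjective (π.subgroupMap_surjective (closure ({a, c} : Set G)))
  have hle : closure ({a, b} : Set G) ≤ comap π S := by
    apply (closure_le _).mpr
    rintro y (rfl | rfl)
    · exact subset_closure (Set.mem_insert _ _)
    · show (π y) ∈ S
      have : π y = ((c : G) : G ⧸ R) := hbc
      rw [this]
      exact subset_closure (Set.mem_insert_of_mem _ rfl)
  haveI : Group.IsSolvable (comap π S) := comap_mk'_solvable R hRs S hS
  exact solvable_of_solvable_injective (Subgroup.inclusion_injective hle)

theorem stmt6 {G : Type*} [Group G] [Fintype G] (hG : ¬ IsSolvable G)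
    (R : Subgroup G) (hR : IsSolvableRadical R) (x : G) (hx : x ∉ R) :
    (∀ y ∈ nsNbhd R x, ∀ z ∈ R, y * z ∈ nsNbhd R x) ∧
      Nat.card R ∣ (nsNbhd R x).ncard := by
  classical
  obtain ⟨hRsolv, hRnorm, _⟩ := hR
  haveI := hRnorm
  have key : ∀ y ∈ nsNbhd R x, ∀ z ∈ R, y * z ∈ nsNbhd R x := by
    rintro y ⟨hy1, hy2, hy3⟩ z hz
    have hquot : ((y * z : G) : G ⧸ R) = (y : G ⧸ R) := by
      rw [QuotientGroup.eq]
      simpa using R.inv_mem hz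
    refine ⟨?_, ?_, ?_⟩
    · intro hmem
      exact hy1 (by simpa using R.mul_mem hmem (R.inv_mem hz))
    · intro heq
      -- then x and y have the same image, so ⟨x, y⟩ would be solvable
      apply hy3
      refine solvable_transfer R hRsolv x y x ?_ ?_
      · rw [← heq, ← hquot]
      · have hcl : closure ({x, x} : Set G) = zpowers x := by
          rw [zpowers_eq_closure]; congr 1; simp
        rw [hcl]; exact (inferInstance : Group.IsSolvable (zpowers x))
    · intro hsolv
      exact hy3 (solvable_transfer R hRsolv x y (y * z) hquot.symm hsolv)
  refine ⟨key, ?_⟩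
  haveI : Fintype R := Fintype.ofFinite R
  set N := nsNbhd R x with hN
  set s : Finset G := N.toFinset with hs
  rw [Set.ncard_eq_toFinset_card']
  set f : G → G ⧸ R := QuotientGroup.mk with hf
  rw [Finset.card_eq_sum_card_fiberwise (f := f) (t := s.image f)
    (fun y hy => Finset.mem_image_of_mem f hy)]
  have hfib : ∀ q ∈ s.image f, (s.filter (fun y => f y = q)).card = Fintype.card R := by
    intro q hq
    obtain ⟨y0, hy0, rfl⟩ := Finset.mem_image.mp hq
    have hy0N : y0 ∈ N := Set.mem_toFinset.mp hy0
    have : s.filter (fun y => f y = f y0) =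
        Finset.image (fun r : R => y0 * (r : G)) Finset.univ := by
      ext y
      simp only [Finset.mem_filter, Finset.mem_image, Finset.mem_univ, true_and]
      constructor
      · rintro ⟨hyN, hyq⟩
        have : y0⁻¹ * y ∈ R := QuotientGroup.eq.mp hyq.symm
        exact ⟨⟨y0⁻¹ * y, this⟩, by group⟩
      · rintro ⟨r, rfl⟩
        refine ⟨Set.mem_toFinset.mpr (key y0 hy0N r r.2), ?_⟩
        show ((y0 * (r : G) : G) : G ⧸ R) = ((y0 : G) : G ⧸ R)
        rw [QuotientGroup.eq]
        simpa using R.inv_mem r.2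
    rw [this, Finset.card_image_of_injective _
      (fun a b hab => Subtype.ext (mul_left_cancel hab)), Finset.card_univ]
  rw [Finset.sum_congr rfl hfib, Finset.sum_const, smul_eq_mul, Nat.card_eq_fintype_card]
  exact dvd_mul_left _ _
end

section
/- Let G be a finite non-solvable group. Then the degree of a vertex x in the non-solvable graph of G equals |Sol(G)| times the degree of the coset x·Sol(G) in the non-solvable graph of G/Sol(G). -/
open Subgroup

section Aux
variable {Q : Type*} [Group Q]

lemma solvable_of_le {K L : Subgroup Q} (h : K ≤ L) [Group.IsSolvable L] : IsSolvable K :=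
  solvable_of_solvable_injective (Subgroup.inclusion_injective h)

instance zp_solv (a : Q) : Group.IsSolvable (zpowers a) :=
  isSolvable_of_comm fun x y => by
    obtain ⟨m, hm⟩ := mem_zpowers_iff.mp x.2
    obtain ⟨n, hn⟩ := mem_zpowers_iff.mp y.2
    exact Subtype.ext (by rw [coe_mul, coe_mul, ← hm, ← hn]; exact zpow_mul_comm a m n)

lemma solvable_pair_self (a : Q) : IsSolvable (closure ({a, a} : Set Q)) := by
  have h : closure ({a, a} : Set Q) ≤ zpowers a := by
    rw [closure_le]
    rintro z (rfl | rfl) <;> exact mem_zpowers z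
  exact solvable_of_le h

lemma solvable_pair_one (a : Q) : IsSolvable (closure ({a, (1 : Q)} : Set Q)) := by
  have h : closure ({a, (1 : Q)} : Set Q) ≤ zpowers a := by
    rw [closure_le]
    rintro z (rfl | rfl)
    · exact mem_zpowers z
    · exact one_mem _
  exact solvable_of_le h
end Aux

section Key
variable {G : Type*} [Group G] (R : Subgroup G) [R.Normal] [Group.IsSolvable R]

lemma solv_map_iff (H : Subgroup G) :
    IsSolvable H ↔ IsSolvable (H.map (QuotientGroup.mk' R)) := by
  constructor
  · intro (h : Group.IsSolvable H)
    exact solvable_of_surjective (f := ((QuotientGroup.mk' R).subgroupMap H))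
      (MonoidHom.subgroupMap_surjective _ _)
  · intro (h : Group.IsSolvable (H.map (QuotientGroup.mk' R)))
    have hker : ((QuotientGroup.mk' R).comp H.subtype).ker ≤ (R.subgroupOf H).subtype.range := by
      intro z hz
      simp only [MonoidHom.mem_ker, MonoidHom.comp_apply, QuotientGroup.mk'_apply,
        QuotientGroup.eq_one_iff] at hz
      exact ⟨⟨z, hz⟩, rfl⟩
    have h1 : Group.IsSolvable (R.subgroupOf H) :=
      solvable_of_solvable_injective (G' := R)
        (f := (H.subtype.comp (R.subgroupOf H).subtype).codRestrict R (fun z => z.2))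
        (by
          intro a b hab
          have := congrArg Subtype.val hab
          exact Subtype.ext (Subtype.ext this))
    have h2 : Group.IsSolvable ((QuotientGroup.mk' R).comp H.subtype).range := by
      have : ((QuotientGroup.mk' R).comp H.subtype).range = H.map (QuotientGroup.mk' R) := by
        rw [MonoidHom.range_comp, range_subtype]
      rw [this]; exact h
    exact solvable_of_ker_le_range (R.subgroupOf H).subtype
      (((QuotientGroup.mk' R).comp H.subtype).rangeRestrict)
      (by rwa [MonoidHom.ker_rangeRestrict])

lemma closure_pair_map_mk (x y : G) :
    (closure ({x, y} : Set G)).map (QuotientGroup.mk' R) =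
      closure ({((x : G ⧸ R)), ((y : G ⧸ R))} : Set (G ⧸ R)) := by
  rw [MonoidHom.map_closure, Set.image_pair]
  rfl

lemma solv_pair_iff (x y : G) :
    IsSolvable (closure ({x, y} : Set G)) ↔
      IsSolvable (closure ({((x : G ⧸ R)), ((y : G ⧸ R))} : Set (G ⧸ R))) := by
  rw [solv_map_iff R, closure_pair_map_mk]
end Key

theorem stmt7 {G : Type*} [Group G] [Fintype G] (hG : ¬ IsSolvable G)
    (R : Subgroup G) [R.Normal] (hR : IsSolvableRadical R) (x : G) (hx : x ∉ R) :
    (nsNbhd R x).ncard = Nat.card R * (nsNbhdSet ((x : G ⧸ R))).ncard := by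
  have hRs : Group.IsSolvable R := hR.1
  have hset : nsNbhd R x = QuotientGroup.mk ⁻¹' (nsNbhdSet ((x : G ⧸ R))) := by
    ext y
    constructor
    · rintro ⟨hyR, hyx, hns⟩
      have hns' : ¬ IsSolvable (closure ({((x : G ⧸ R)), ((y : G ⧸ R))} : Set (G ⧸ R))) := by
        rwa [← solv_pair_iff R]
      refine ⟨fun h => hns' ?_, fun h => ?_, hns'⟩
      · have := h (x : G ⧸ R)
        rwa [Set.pair_comm] at this
      · rw [h] at hns'; exact hns' (solvable_pair_self _)
    · rintro ⟨_, _, hns'⟩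
      have hns : ¬ IsSolvable (closure ({x, y} : Set G)) := by
        rwa [solv_pair_iff R]
      refine ⟨fun h => ?_, fun h => ?_, hns⟩
      · have hy1 : ((y : G ⧸ R)) = 1 := (QuotientGroup.eq_one_iff y).mpr h
        rw [hy1] at hns'
        exact hns' (solvable_pair_one _)
      · rw [h] at hns; exact hns (solvable_pair_self _)
  rw [hset, ← Nat.card_coe_set_eq,
    Nat.card_congr (QuotientGroup.preimageMkEquivSubgroupProdSet R _),
    Nat.card_prod, Nat.card_coe_set_eq]
end

section
/- Let G be a finite non-solvable group such that |Sol_G(x)| ≤ |G|/2 for all x ∈ G \ Sol(G). Then the non-solvable graph of G is Hamiltonian. -/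
open Subgroup

open SimpleGraph List

namespace DiracAux

variable {α : Type*} {G : SimpleGraph α}

/-- Build a walk from a chain of adjacent vertices. -/
def mkWalk : (u : α) → (l : List α) → List.Chain G.Adj u l → G.Walk u (l.getLastD u)
  | _, [], _ => SimpleGraph.Walk.nil
  | _, _ :: l, h =>
    (SimpleGraph.Walk.cons (List.chain_cons.mp h).1 (mkWalk _ l (List.chain_cons.mp h).2)).copy
      rfl List.getLastD_cons.symm

@[simp] lemma mkWalk_support : ∀ (u : α) (l : List α) (h : List.Chain G.Adj u l),
    (mkWalk u l h).support = u :: l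
  | _, [], _ => rfl
  | u, a :: l, h => by
    rw [mkWalk]
    simp [mkWalk_support a l (List.chain_cons.mp h).2]

@[simp] lemma mkWalk_length : ∀ (u : α) (l : List α) (h : List.Chain G.Adj u l),
    (mkWalk u l h).length = l.length
  | _, [], _ => rfl
  | u, a :: l, h => by
    rw [mkWalk]
    simp [mkWalk_length a l (List.chain_cons.mp h).2]

end DiracAux

namespace DiracAux
variable {α : Type*} {G : SimpleGraph α}

/-- prefix of a chain is a chain -/
lemma chain_prefix {r : α → α → Prop} : ∀ (u : α) (l₁ l₂ : List α),
    List.Chain r u (l₁ ++ l₂) → List.Chain r u l₁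
  | _, [], _, _ => List.Chain.nil
  | u, a :: l₁, l₂, h => by
    rw [List.Chain, List.cons_append, List.chain_cons] at h
    exact List.chain_cons.mpr ⟨h.1, chain_prefix a l₁ l₂ h.2⟩

/-- rotation of a cyclic chain -/
lemma chain_rotate {r : α → α → Prop} {u x : α} {l s t : List α}
    (hc : List.Chain r u (l ++ [u])) (hsplit : u :: l = s ++ x :: t) :
    List.Chain r x (t ++ s ++ [x]) := by
  rcases s with _ | ⟨a, s'⟩
  · simp only [List.nil_append, List.cons_eq_cons] at hsplit
    obtain ⟨rfl, rfl⟩ := hsplit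
    simpa using hc
  · rw [List.cons_append, List.cons_eq_cons] at hsplit
    obtain ⟨rfl, rfl⟩ := hsplit
    have h1 : List.Chain r u (s' ++ x :: (t ++ [u])) := by
      simpa using hc
    rw [List.Chain, List.isChain_cons_split] at h1
    have target : List.Chain r x (t ++ u :: (s' ++ [x])) := by
      rw [List.Chain, List.isChain_cons_split]
      exact ⟨h1.2, h1.1⟩
    simpa using target

/-- a path of length ≥ 2 does not contain the edge between its endpoints -/
lemma edge_ends_not_mem {b u : α} {p : G.Walk b u} (hp : p.IsPath) (h2 : 2 ≤ p.length) :
    s(u, b) ∉ p.edges := by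
  cases p with
  | nil => simp at h2
  | @cons _ c _ h q =>
    intro hmem
    rw [SimpleGraph.Walk.edges_cons, List.mem_cons] at hmem
    have hq : q.IsPath := ((SimpleGraph.Walk.cons_isPath_iff _ _).mp hp).1
    have hbq : b ∉ q.support := ((SimpleGraph.Walk.cons_isPath_iff _ _).mp hp).2
    rcases hmem with he | he
    · rw [Sym2.eq_iff] at he
      rcases he with ⟨hub, hbc⟩ | ⟨huc, -⟩
      · subst hub
        rw [(SimpleGraph.Walk.isPath_iff_eq_nil).mp hp] at h2
        simp at h2
      · subst huc
        have := (SimpleGraph.Walk.isPath_iff_eq_nil).mp hq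
        subst this
        simp [SimpleGraph.Walk.length_cons] at h2
    · exact hbq (q.snd_mem_support_of_mem_edges he)

end DiracAux

namespace DiracAux
variable {α : Type*} {G : SimpleGraph α}

lemma support_getElem : ∀ {u v : α} (p : G.Walk u v) (i : ℕ) (h : i < p.support.length),
    p.support[i] = p.getVert i
  | _, _, SimpleGraph.Walk.nil, 0, _ => rfl
  | _, _, SimpleGraph.Walk.cons h q, 0, _ => rfl
  | _, _, SimpleGraph.Walk.cons h q, (i+1), hi => by
    simp only [SimpleGraph.Walk.support_cons, List.getElem_cons_succ,
      SimpleGraph.Walk.getVert_cons_succ]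
    exact support_getElem q i (by simpa using hi)

/-- Build a Hamiltonian cycle from a list covering all vertices with cyclic adjacency. -/
lemma ham_of_list [DecidableEq α] (u : α) (l : List α) (hc : List.Chain G.Adj u (l ++ [u]))
    (hn : (u :: l).Nodup) (h2 : 2 ≤ l.length) (hall : ∀ x : α, x ∈ u :: l) :
    ∃ p : G.Walk u u, p.IsHamiltonianCycle := by
  rcases l with _ | ⟨c, l'⟩
  · simp at h2
  rw [List.Chain, List.cons_append, List.chain_cons] at hc
  obtain ⟨huc, hc⟩ := hc
  have hlast : (l' ++ [u]).getLastD c = u := by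
    simp [List.getLastD_concat]
  let q : G.Walk c u := (mkWalk c (l' ++ [u]) hc).copy rfl hlast
  have hqsupp : q.support = c :: (l' ++ [u]) := by
    simp [q, mkWalk_support c (l' ++ [u]) hc]
  simp only [List.nodup_cons, List.mem_cons, not_or] at hn
  have hqn : (c :: (l' ++ [u])).Nodup := by
    simp only [List.nodup_cons, List.mem_append, List.mem_singleton, not_or]
    refine ⟨⟨hn.2.1, fun h => hn.1.1 h.symm⟩, ?_⟩
    rw [List.nodup_append]
    refine ⟨hn.2.2, List.nodup_singleton u, ?_⟩
    intro a ha b hb hab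
    rw [List.mem_singleton] at hb
    exact hn.1.2 (by rw [← hb, ← hab]; exact ha)
  have hqpath : q.IsPath := by
    rw [SimpleGraph.Walk.isPath_def, hqsupp]; exact hqn
  have hqlen : 2 ≤ q.length := by
    simp only [q, SimpleGraph.Walk.length_copy, mkWalk_length c (l' ++ [u]) hc, List.length_append,
      List.length_singleton]
    simpa using h2
  refine ⟨SimpleGraph.Walk.cons huc q, ?_⟩
  rw [SimpleGraph.Walk.isHamiltonianCycle_iff_isCycle_and_support_count_tail_eq_one]
  constructor
  · exact (SimpleGraph.Walk.cons_isCycle_iff q huc).mpr ⟨hqpath, edge_ends_not_mem hqpath hqlen⟩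
  · intro a
    have hts : ((SimpleGraph.Walk.cons huc q).support).tail = c :: (l' ++ [u]) := by
      simp [hqsupp]
    rw [hts]
    have hmem : a ∈ c :: (l' ++ [u]) := by
      rcases List.mem_cons.mp (hall a) with rfl | h
      · simp
      · rcases List.mem_cons.mp h with rfl | h2
        · simp
        · simp [h2]
    exact List.count_eq_one_of_mem hqn hmem

end DiracAux

namespace DiracAux
open Finset in
theorem dirac {α : Type*} [Fintype α] [DecidableEq α] (G : SimpleGraph α) [DecidableRel G.Adj]
    (h3 : 3 ≤ Fintype.card α) (hdeg : ∀ v : α, Fintype.card α ≤ 2 * G.degree v) :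
    G.IsHamiltonian := by
  classical
  intro _
  set n := Fintype.card α with hn
  have hne : Nonempty α := Fintype.card_pos_iff.mp (by omega)
  obtain ⟨a0⟩ := hne
  set P : ℕ → Prop := fun m => ∃ (u v : α) (p : G.Walk u v), p.IsPath ∧ p.length = m with hP
  have hP0 : P 0 := ⟨a0, a0, SimpleGraph.Walk.nil, SimpleGraph.Walk.IsPath.nil, rfl⟩
  have hPbound : ∀ m, P m → m ≤ n - 1 := by
    rintro m ⟨u, v, p, hp, rfl⟩
    have := hp.length_lt
    omega
  set k := Nat.findGreatest P (n - 1) with hk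
  have hPk : P k := Nat.findGreatest_spec (Nat.zero_le _) hP0
  have hmax : ∀ (u' v' : α) (q : G.Walk u' v'), q.IsPath → q.length ≤ k := by
    intro u' v' q hq
    exact Nat.le_findGreatest (hPbound _ ⟨u', v', q, hq, rfl⟩) ⟨u', v', q, hq, rfl⟩
  obtain ⟨u, v, p, hpath, hlen⟩ := hPk
  set s := p.support with hs
  have hslen : s.length = k + 1 := by rw [hs, SimpleGraph.Walk.length_support, hlen]
  have hnodup : s.Nodup := hpath.support_nodup
  -- all neighbours of the endpoints lie on the path
  have hnbu : ∀ w, G.Adj u w → w ∈ s := by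
    intro w hw
    by_contra hws
    have hq : (SimpleGraph.Walk.cons hw.symm p).IsPath := hpath.cons hws
    have := hmax _ _ _ hq
    simp only [SimpleGraph.Walk.length_cons, hlen] at this
    omega
  have hnbv : ∀ w, G.Adj v w → w ∈ s := by
    intro w hw
    by_contra hws
    have hq : (SimpleGraph.Walk.cons hw.symm p.reverse).IsPath :=
      hpath.reverse.cons (by rwa [SimpleGraph.Walk.support_reverse, List.mem_reverse])
    have := hmax _ _ _ hq
    simp only [SimpleGraph.Walk.length_cons, SimpleGraph.Walk.length_reverse, hlen] at this
    omega
  -- degrees are at most k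
  have hstf : s.toFinset.card = k + 1 := by
    rw [List.toFinset_card_of_nodup hnodup, hslen]
  have hdegu : G.degree u ≤ k := by
    have hsub : G.neighborFinset u ⊆ s.toFinset.erase u := by
      intro w hw
      rw [SimpleGraph.mem_neighborFinset] at hw
      exact Finset.mem_erase.mpr ⟨hw.ne', List.mem_toFinset.mpr (hnbu w hw)⟩
    have h1 := Finset.card_le_card hsub
    rw [Finset.card_erase_of_mem (List.mem_toFinset.mpr p.start_mem_support), hstf] at h1
    have h2 : #(G.neighborFinset u) = G.degree u := rfl
    omega
  have hdegv : G.degree v ≤ k := by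
    have hsub : G.neighborFinset v ⊆ s.toFinset.erase v := by
      intro w hw
      rw [SimpleGraph.mem_neighborFinset] at hw
      exact Finset.mem_erase.mpr ⟨hw.ne', List.mem_toFinset.mpr (hnbv w hw)⟩
    have h1 := Finset.card_le_card hsub
    rw [Finset.card_erase_of_mem (List.mem_toFinset.mpr p.end_mem_support), hstf] at h1
    have h2 : #(G.neighborFinset v) = G.degree v := rfl
    omega
  have hk2 : 2 ≤ k := by
    have := hdeg u
    omega
  have hkn : k + 1 ≤ n := by
    have := Finset.card_le_univ s.toFinset
    rw [hstf] at this
    simpa using this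
  -- injectivity of getVert
  have hinj : ∀ i j, i ≤ k → j ≤ k → p.getVert i = p.getVert j → i = j := by
    intro i j hi hj hij
    have hi' : i < s.length := by omega
    have hj' : j < s.length := by omega
    rw [← support_getElem p i hi', ← support_getElem p j hj'] at hij
    exact (hnodup.getElem_inj_iff).mp hij
  -- pigeonhole
  set S : Finset ℕ := (Finset.range k).filter (fun i => G.Adj u (p.getVert (i + 1))) with hS
  set T : Finset ℕ := (Finset.range k).filter (fun i => G.Adj v (p.getVert i)) with hT
  have hcardS : S.card = G.degree u := by
    apply Finset.card_bij (fun i _ => p.getVert (i + 1))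
    · intro i hi
      rw [hS, Finset.mem_filter] at hi
      exact (SimpleGraph.mem_neighborFinset _ _ _).mpr hi.2
    · intro i hi j hj hij
      rw [hS, Finset.mem_filter, Finset.mem_range] at hi hj
      have := hinj (i + 1) (j + 1) (by omega) (by omega) hij
      omega
    · intro w hw
      rw [SimpleGraph.mem_neighborFinset] at hw
      obtain ⟨m, hm, hmle⟩ := SimpleGraph.Walk.mem_support_iff_exists_getVert.mp (hnbu w hw)
      have hm0 : m ≠ 0 := by
        intro h; subst h
        rw [SimpleGraph.Walk.getVert_zero] at hm
        exact hw.ne hm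
      refine ⟨m - 1, ?_, ?_⟩
      · rw [hS, Finset.mem_filter, Finset.mem_range]
        have : m - 1 + 1 = m := by omega
        rw [this, hm]
        exact ⟨by omega, hw⟩
      · have : m - 1 + 1 = m := by omega
        rw [this, hm]
  have hcardT : T.card = G.degree v := by
    apply Finset.card_bij (fun i _ => p.getVert i)
    · intro i hi
      rw [hT, Finset.mem_filter] at hi
      exact (SimpleGraph.mem_neighborFinset _ _ _).mpr hi.2
    · intro i hi j hj hij
      rw [hT, Finset.mem_filter, Finset.mem_range] at hi hj
      exact hinj i j (by omega) (by omega) hij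
    · intro w hw
      rw [SimpleGraph.mem_neighborFinset] at hw
      obtain ⟨m, hm, hmle⟩ := SimpleGraph.Walk.mem_support_iff_exists_getVert.mp (hnbv w hw)
      have hgvk : p.getVert k = v := by rw [← hlen]; exact p.getVert_length
      have hmk : m ≠ k := by
        intro h; subst h
        rw [hgvk] at hm
        exact hw.ne hm
      refine ⟨m, ?_, hm⟩
      rw [hT, Finset.mem_filter, Finset.mem_range]
      rw [hlen] at hmle
      exact ⟨by omega, hm ▸ hw⟩
  have hex : ∃ i, i ∈ S ∧ i ∈ T := by
    by_contra hcon
    push_neg at hcon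
    have hdisj : Disjoint S T := by
      rw [Finset.disjoint_left]
      intro i hi hit
      exact hcon i hi hit
    have hcup : (S ∪ T).card = S.card + T.card := Finset.card_union_of_disjoint hdisj
    have hsub : S ∪ T ⊆ Finset.range k := by
      rw [hS, hT]
      exact Finset.union_subset (Finset.filter_subset _ _) (Finset.filter_subset _ _)
    have := Finset.card_le_card hsub
    rw [hcup, Finset.card_range, hcardS, hcardT] at this
    have h1 := hdeg u
    have h2 := hdeg v
    omega
  obtain ⟨i, hiS, hiT⟩ := hex
  rw [hS, Finset.mem_filter, Finset.mem_range] at hiS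
  rw [hT, Finset.mem_filter, Finset.mem_range] at hiT
  obtain ⟨hik, hub⟩ := hiS
  obtain ⟨-, hva⟩ := hiT
  -- build the cycle list
  set A := s.take (i + 1) with hA
  set B := s.drop (i + 1) with hB
  have hsget : ∀ j, ∀ h : j < s.length, s[j]? = some (p.getVert j) := by
    intro j h
    rw [List.getElem?_eq_getElem h]
    exact congrArg some (support_getElem p j h)
  have hs_head : s.head? = some u := by
    rw [hs, p.support_eq_cons]; rfl
  have hs_last : s.getLast? = some v := by
    rw [List.getLast?_eq_getElem?, hslen, Nat.add_sub_cancel, hsget k (by omega)]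
    congr 1
    rw [← hlen]
    exact p.getVert_length
  have hA_head : A.head? = some u := by
    rw [hA, List.head?_take, if_neg (by omega)]
    exact hs_head
  have hA_last : A.getLast? = some (p.getVert i) := by
    rw [hA, List.getLast?_take, if_neg (by omega), Nat.add_sub_cancel, hsget i (by omega)]
    rfl
  have hB_head : B.head? = some (p.getVert (i + 1)) := by
    rw [hB, List.head?_drop]
    exact hsget (i + 1) (by omega)
  have hB_last : B.getLast? = some v := by
    rw [hB, List.getLast?_drop, if_neg (by omega)]
    exact hs_last
  -- chain' for the cycle
  have hchainA : List.Chain' G.Adj A := (SimpleGraph.Walk.isChain_adj_support p).take _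
  have hchainB : List.Chain' G.Adj B := (SimpleGraph.Walk.isChain_adj_support p).drop _
  have hchainBrev : List.Chain' G.Adj B.reverse :=
    List.isChain_reverse.mpr (hchainB.imp (fun a b h => h.symm))
  have hchain' : List.Chain' G.Adj (A ++ (B.reverse ++ [u])) := by
    rw [List.Chain', List.isChain_append]
    refine ⟨hchainA, ?_, ?_⟩
    · rw [List.isChain_append]
      refine ⟨hchainBrev, List.isChain_singleton u, ?_⟩
      intro x hx y hy
      rw [List.getLast?_reverse, hB_head] at hx
      simp only [Option.mem_def, Option.some.injEq] at hx
      simp only [List.head?_cons, Option.mem_def, Option.some.injEq] at hy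
      subst hx; subst hy
      exact hub.symm
    · intro x hx y hy
      rw [hA_last] at hx
      simp only [Option.mem_def, Option.some.injEq] at hx
      rw [List.head?_append, List.head?_reverse, hB_last] at hy
      rw [show (some v).or ([u].head?) = some v from rfl] at hy
      simp only [Option.mem_def, Option.some.injEq] at hy
      subst hx; subst hy
      exact hva.symm
  -- write the cycle as u :: L
  obtain ⟨A', hA'⟩ : ∃ A', A = u :: A' := by
    cases hAc : A with
    | nil => rw [hAc] at hA_head; simp at hA_head
    | cons a A' =>
      rw [hAc, List.head?_cons, Option.some.injEq] at hA_head
      exact ⟨A', by rw [hA_head]⟩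
  set L := A' ++ B.reverse with hL
  have hchain : List.Chain G.Adj u (L ++ [u]) := by
    have h1 := hchain'
    rw [hA', List.cons_append] at h1
    rw [hL]
    rw [List.append_assoc]
    exact h1
  have hperm : (u :: L : List α) ~ s := by
    have h1 : A ++ B.reverse ~ A ++ B := List.Perm.append_left _ (List.reverse_perm B)
    rw [hA, hB, List.take_append_drop] at h1
    rw [hL, ← List.cons_append, ← hA']
    exact h1
  have hnodc : (u :: L : List α).Nodup := hperm.nodup_iff.mpr hnodup
  have hculen : (u :: L : List α).length = k + 1 := by rw [hperm.length_eq, hslen]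
  -- covering: every vertex lies on the path
  have hcov : ∀ x : α, x ∈ s := by
    by_contra hcon
    push_neg at hcon
    obtain ⟨w, hw⟩ := hcon
    have hnbw : ∃ x ∈ s, G.Adj w x := by
      by_contra hno
      push_neg at hno
      have hsub : G.neighborFinset w ⊆ (Finset.univ \ s.toFinset).erase w := by
        intro y hy
        rw [SimpleGraph.mem_neighborFinset] at hy
        refine Finset.mem_erase.mpr ⟨hy.ne', Finset.mem_sdiff.mpr ⟨Finset.mem_univ _, ?_⟩⟩
        intro hys
        exact hno y (List.mem_toFinset.mp hys) hy
      have h1 := Finset.card_le_card hsub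
      have h2 : #(G.neighborFinset w) = G.degree w := rfl
      have h3 : w ∈ Finset.univ \ s.toFinset :=
        Finset.mem_sdiff.mpr ⟨Finset.mem_univ _, fun hh => hw (List.mem_toFinset.mp hh)⟩
      rw [Finset.card_erase_of_mem h3] at h1
      have h4 : #(Finset.univ \ s.toFinset) = n - (k + 1) := by
        rw [Finset.card_sdiff_of_subset (Finset.subset_univ _), hstf, Finset.card_univ]
      have h5 := hdeg w
      have h6 := hdeg u
      omega
    obtain ⟨x, hxs, hwx⟩ := hnbw
    have hxc : x ∈ (u :: L : List α) := (hperm.mem_iff).mpr hxs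
    obtain ⟨s₁, t, hsplit⟩ := List.append_of_mem hxc
    have hrot := chain_rotate hchain hsplit
    have hch2 : List.Chain G.Adj w (x :: (t ++ s₁)) :=
      List.chain_cons.mpr ⟨hwx, chain_prefix x (t ++ s₁) [x] (by simpa using hrot)⟩
    have hpermrot : (x :: (t ++ s₁) : List α) ~ (u :: L : List α) := by
      rw [hsplit]
      calc (x :: (t ++ s₁) : List α) = (x :: t) ++ s₁ := by simp
        _ ~ s₁ ++ (x :: t) := List.perm_append_comm
    let q : G.Walk w _ := mkWalk w (x :: (t ++ s₁)) hch2
    have hqsup : q.support = w :: x :: (t ++ s₁) := mkWalk_support _ _ _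
    have hqpath : q.IsPath := by
      rw [SimpleGraph.Walk.isPath_def, hqsup, List.nodup_cons]
      refine ⟨?_, hpermrot.nodup_iff.mpr hnodc⟩
      intro hmem
      exact hw (hperm.mem_iff.mp (hpermrot.mem_iff.mp hmem))
    have hql : q.length = k + 1 := by
      have := hpermrot.length_eq
      rw [hculen] at this
      simp only [q, mkWalk_length]
      simpa using this
    have := hmax _ _ q hqpath
    omega
  -- conclude
  have hall : ∀ x : α, x ∈ (u :: L : List α) := fun x => hperm.mem_iff.mpr (hcov x)
  have hL2 : 2 ≤ L.length := by
    simp only [List.length_cons] at hculen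
    omega
  obtain ⟨pc, hpc⟩ := ham_of_list u L hchain hnodc hL2 hall
  exact ⟨u, pc, hpc⟩
end DiracAux



namespace DiracAux2

variable {G : Type*} [Group G]

/-- Elements of a solvable normal subgroup generate a solvable subgroup with any element. -/
lemma solvable_closure_pair_of_mem {R : Subgroup G} [R.Normal] (hRsol : IsSolvable R)
    {g x : G} (hg : g ∈ R) : IsSolvable (closure ({g, x} : Set G)) := by
  set H := closure ({g, x} : Set G) with hH
  set φ : H →* G ⧸ R := (QuotientGroup.mk' R).comp H.subtype with hφ
  have hrange : ∀ h : H, φ h ∈ zpowers ((x : G ⧸ R)) := by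
    rintro ⟨z, hz⟩
    induction hz using closure_induction with
    | mem w hw =>
      rcases hw with rfl | hw
      · have : φ ⟨w, subset_closure (by simp)⟩ = 1 := by
          simp only [hφ, MonoidHom.comp_apply, QuotientGroup.mk'_apply]
          exact (QuotientGroup.eq_one_iff w).mpr hg
        rw [this]; exact one_mem _
      · rw [Set.mem_singleton_iff] at hw
        subst hw
        exact mem_zpowers _
    | one =>
      have : φ ⟨1, one_mem H⟩ = 1 := map_one φ
      rw [this]; exact one_mem _
    | mul a b ha hb iha ihb =>
      have : φ ⟨a * b, mul_mem ha hb⟩ = φ ⟨a, ha⟩ * φ ⟨b, hb⟩ := by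
        rw [← map_mul]; rfl
      rw [this]; exact mul_mem iha ihb
    | inv a ha iha =>
      have : φ ⟨a⁻¹, inv_mem ha⟩ = (φ ⟨a, ha⟩)⁻¹ := by
        rw [← map_inv]; rfl
      rw [this]; exact inv_mem iha
  set ψ : H →* zpowers ((x : G ⧸ R)) := φ.codRestrict _ hrange with hψ
  set K := R.comap H.subtype with hK
  haveI hKsol : Group.IsSolvable K := by
    let e : K →* R :=
      { toFun := fun a => ⟨(a : G), a.2⟩
        map_one' := rfl
        map_mul' := fun _ _ => rfl }
    have he : Function.Injective e := by
      intro a b hab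
      have : ((e a : G)) = ((e b : G)) := congrArg Subtype.val hab
      exact Subtype.ext (Subtype.ext this)
    haveI : Group.IsSolvable R := hRsol
    exact solvable_of_solvable_injective he
  haveI : Group.IsSolvable (zpowers ((x : G ⧸ R))) :=
    Group.isSolvable_of_comm (fun a b => Std.Commutative.comm a b)
  apply solvable_of_ker_le_range K.subtype ψ
  intro h hh
  have : φ h = 1 := by
    have := congrArg Subtype.val (hh : ψ h = 1)
    exact this
  have hmem : (h : G) ∈ R := by
    rw [hφ] at this
    simpa using (QuotientGroup.eq_one_iff ((h : G))).mp this
  exact ⟨⟨h, hmem⟩, rfl⟩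

lemma solvable_closure_pair_self (x y : G) (hxy : x = y) :
    IsSolvable (closure ({x, y} : Set G)) := by
  subst hxy
  rw [Set.pair_eq_singleton, ← zpowers_eq_closure]
  exact (Group.isSolvable_of_comm (fun a b => Std.Commutative.comm a b) : Group.IsSolvable (zpowers x))

end DiracAux2

open scoped Classical in
theorem stmt13 {G : Type*} [Group G] [Fintype G] (hG : ¬ IsSolvable G)
    (R : Subgroup G) (hR : IsSolvableRadical R)
    (h : ∀ x : G, x ∉ R → 2 * (solvabilizer x).ncard ≤ Fintype.card G) :
    (nonSolvableGraph G R).IsHamiltonian := by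
  obtain ⟨hRsol, hRnorm, -⟩ := hR
  haveI := hRnorm
  set Γ := nonSolvableGraph G R with hΓ
  -- a vertex exists
  have hex : ∃ x : G, x ∉ R := by
    by_contra h'
    push_neg at h'
    have htop : R = ⊤ := eq_top_iff.mpr fun x _ => h' x
    apply hG
    subst htop
    have hsurj : Function.Surjective (Subgroup.topEquiv (G := G)).toMonoidHom :=
      Subgroup.topEquiv.surjective
    haveI : Group.IsSolvable (⊤ : Subgroup G) := hRsol
    exact solvable_of_surjective hsurj
  -- cardinalities
  have hcardV : Fintype.card {x : G // x ∉ R} + Fintype.card R = Fintype.card G := by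
    rw [Fintype.card_subtype_compl (fun x => x ∈ R)]
    have h1 : Fintype.card {x : G // x ∈ R} = Fintype.card R := Fintype.card_congr (Equiv.refl _)
    have h2 : Fintype.card {x : G // x ∈ R} ≤ Fintype.card G := Fintype.card_subtype_le _
    omega
  have hR1 : 1 ≤ Fintype.card R := Fintype.card_pos
  -- degree computation
  have hdeg : ∀ x : {x : G // x ∉ R},
      Γ.degree x + (solvabilizer (x : G)).ncard = Fintype.card G := by
    intro x
    have hcompl : Γ.degree x = (solvabilizer (x : G))ᶜ.toFinset.card := by
      rw [SimpleGraph.degree]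
      apply Finset.card_bij (fun (y : {x : G // x ∉ R}) _ => (y : G))
      · intro y hy
        rw [SimpleGraph.mem_neighborFinset] at hy
        obtain ⟨hne, hns⟩ := hy
        rw [Set.mem_toFinset, Set.mem_compl_iff]
        intro hmem
        exact hns (by rwa [Set.pair_comm])
      · intro y1 _ y2 _ h12
        exact Subtype.ext h12
      · intro g hg
        rw [Set.mem_toFinset, Set.mem_compl_iff] at hg
        have hgR : g ∉ R := fun hmem =>
          hg (DiracAux2.solvable_closure_pair_of_mem hRsol hmem)
        have hgx : g ≠ (x : G) := fun he => hg (DiracAux2.solvable_closure_pair_self _ _ he)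
        refine ⟨⟨g, hgR⟩, ?_, rfl⟩
        rw [SimpleGraph.mem_neighborFinset]
        refine ⟨fun he => hgx (by rw [he]), ?_⟩
        · intro hsol
          exact hg (by rwa [Set.pair_comm] at hsol)
    have h1 := Set.ncard_add_ncard_compl (solvabilizer (x : G))
    rw [Nat.card_eq_fintype_card] at h1
    rw [hcompl, ← Set.ncard_eq_toFinset_card']
    omega
  -- degree lower bound
  have hdeg2 : ∀ x : {x : G // x ∉ R}, Fintype.card {x : G // x ∉ R} + 1 ≤ 2 * Γ.degree x := by
    intro x
    have h1 := hdeg x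
    have h2 := h (x : G) x.2
    omega
  have h3 : 3 ≤ Fintype.card {x : G // x ∉ R} := by
    obtain ⟨x0, hx0⟩ := hex
    have h1 := hdeg2 ⟨x0, hx0⟩
    have h2 : Γ.degree ⟨x0, hx0⟩ < Fintype.card {x : G // x ∉ R} :=
      SimpleGraph.degree_lt_card_verts (G := Γ) _
    omega
  exact DiracAux.dirac Γ h3 (fun v => by have := hdeg2 v; omega)
end

section
/- Let G be a finite non-solvable group. Then the domination number of the non-solvable graph of G is not equal to 1, i.e., no single vertex is adjacent to all other vertices. -/
open Subgroup

lemma zpowers_isSolvable {G : Type*} [Group G] (a : G) : IsSolvable (zpowers a) := by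
  apply isSolvable_of_comm
  rintro ⟨b, m, rfl⟩ ⟨c, k, rfl⟩
  apply Subtype.ext
  show a ^ m * a ^ k = a ^ k * a ^ m
  rw [← zpow_add, ← zpow_add, add_comm]

lemma invol_closure_isSolvable {G : Type*} [Group G] {x y : G} (hx : x * x = 1)
    (hy : y * y = 1) : IsSolvable (closure ({x, y} : Set G)) := by
  have hxi : x⁻¹ = x := mul_eq_one_iff_inv_eq.mp hx
  have hyi : y⁻¹ = y := mul_eq_one_iff_inv_eq.mp hy
  set t := x * y with ht
  set N : Subgroup G := zpowers t with hN
  set H : Subgroup G := closure ({x, y} : Set G) with hH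
  have hti : t⁻¹ = y * x := by rw [ht, mul_inv_rev, hxi, hyi]
  -- the generators conjugate t to t⁻¹
  have hgent : ∀ g ∈ ({x, y} : Set G), g * t * g⁻¹ = t⁻¹ := by
    rintro g (rfl | rfl)
    · rw [hxi, hti, ht, show g * (g * y) * g = g * g * (y * g) by group, hx, one_mul]
    · rw [hyi, hti, ht, show g * (x * g) * g = g * x * (g * g) by group, hy, mul_one]
  have hgen : ∀ g ∈ ({x, y} : Set G), ∀ n ∈ N, g * n * g⁻¹ ∈ N := by
    rintro g hg n ⟨k, rfl⟩
    rw [show g * t ^ k * g⁻¹ = (g * t * g⁻¹) ^ k from (conj_zpow).symm, hgent g hg]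
    exact ⟨-k, by show t ^ (-k) = t⁻¹ ^ k; rw [zpow_neg, inv_zpow]⟩
  have hgg : ∀ g ∈ ({x, y} : Set G), g * g = 1 := by rintro g (rfl | rfl) <;> assumption
  have hconj : ∀ g ∈ H, ∀ n : G, n ∈ N ↔ g * n * g⁻¹ ∈ N := by
    intro g hg
    induction hg using closure_induction with
    | mem g hg' =>
      intro n
      constructor
      · exact hgen g hg' n
      · intro h
        have h2 := hgen g hg' _ h
        rwa [mul_eq_one_iff_inv_eq.mp (hgg g hg'),
          show g * (g * n * g) * g = g * g * n * (g * g) by group, hgg g hg', one_mul,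
          mul_one] at h2
    | one => intro n; simp
    | mul a b ha hb iha ihb =>
      intro n
      rw [show a * b * n * (a * b)⁻¹ = a * (b * n * b⁻¹) * a⁻¹ by group]
      exact (ihb n).trans (iha (b * n * b⁻¹))
    | inv a ha iha =>
      intro n
      rw [inv_inv]
      have h2 := iha (a⁻¹ * n * a)
      rw [show a * (a⁻¹ * n * a) * a⁻¹ = n by group] at h2
      exact h2.symm
  have hNormal : (N.subgroupOf H).Normal := by
    constructor
    intro n hn g
    rw [mem_subgroupOf] at hn ⊢
    push_cast
    exact (hconj (↑g) g.2 (↑n)).mp hn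
  haveI := hNormal
  haveI hNs : IsSolvable (N.subgroupOf H) := by
    let f : (N.subgroupOf H) →* N :=
      { toFun := fun n => ⟨(n : H), n.2⟩, map_one' := rfl, map_mul' := fun _ _ => rfl }
    haveI := zpowers_isSolvable t
    exact @solvable_of_solvable_injective _ _ _ _ f (fun a b h => by
        have h2 := congrArg Subtype.val h
        exact Subtype.ext (Subtype.ext h2)) this
  have hxH : x ∈ H := subset_closure (Set.mem_insert _ _)
  have hyH : y ∈ H := subset_closure (Set.mem_insert_of_mem _ rfl)
  set X : H := ⟨x, hxH⟩
  set Y : H := ⟨y, hyH⟩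
  set Q := H ⧸ N.subgroupOf H with hQ
  have hXY : (QuotientGroup.mk Y : Q) = QuotientGroup.mk X := by
    rw [QuotientGroup.eq]
    rw [mem_subgroupOf]
    show (y⁻¹ * x : G) ∈ N
    rw [hyi, ← hti]
    exact inv_mem (mem_zpowers t)
  set c : Q := QuotientGroup.mk X with hc
  have key : ∀ g (hg : g ∈ H), (QuotientGroup.mk (⟨g, hg⟩ : H) : Q) ∈ zpowers c := by
    intro g hg
    induction hg using closure_induction with
    | mem g hg' =>
      rcases hg' with rfl | rfl
      · exact mem_zpowers _
      · show (QuotientGroup.mk Y : Q) ∈ zpowers c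
        rw [hXY]; exact mem_zpowers _
    | one => exact ⟨0, by show c ^ (0:ℤ) = _; rw [zpow_zero]; rfl⟩
    | mul a b ha hb pa pb =>
      rw [show (⟨a * b, mul_mem ha hb⟩ : H) = ⟨a, ha⟩ * ⟨b, hb⟩ from rfl,
        QuotientGroup.mk_mul]
      exact mul_mem pa pb
    | inv a ha pa =>
      rw [show (⟨a⁻¹, inv_mem ha⟩ : H) = (⟨a, ha⟩ : H)⁻¹ from rfl, QuotientGroup.mk_inv]
      exact inv_mem pa
  haveI hQs : IsSolvable Q := by
    apply isSolvable_of_comm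
    intro a b
    obtain ⟨a, rfl⟩ := QuotientGroup.mk_surjective a
    obtain ⟨b, rfl⟩ := QuotientGroup.mk_surjective b
    obtain ⟨m, hm⟩ := key (↑a) a.2
    obtain ⟨k, hk⟩ := key (↑b) b.2
    rw [show a = (⟨↑a, a.2⟩ : H) from rfl, show b = (⟨↑b, b.2⟩ : H) from rfl, ← hm, ← hk,
      ← zpow_add, ← zpow_add, add_comm]
  exact solvable_of_ker_le_range (N.subgroupOf H).subtype
    (QuotientGroup.mk' (N.subgroupOf H))
    (by rw [QuotientGroup.ker_mk', Subgroup.range_subtype]) (hG' := hNs) (hG'' := hQs)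

theorem stmt14 {G : Type*} [Group G] [Fintype G] (hG : ¬ IsSolvable G)
    (R : Subgroup G) (hR : IsSolvableRadical R) :
    ¬ ∃ x : {x : G // x ∉ R}, ∀ y, y ≠ x → (nonSolvableGraph G R).Adj x y := by
  rintro ⟨⟨x, hxR⟩, hdom⟩
  by_cases hx2 : x⁻¹ = x
  · by_cases hc : ∀ g : G, g * x * g⁻¹ = x
    · have hnorm : (zpowers x).Normal := by
        constructor
        rintro n ⟨k, rfl⟩ g
        refine ⟨k, ?_⟩
        show x ^ k = g * x ^ k * g⁻¹
        rw [← conj_zpow, hc g]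
      exact hxR (hR.2.2 _ hnorm (zpowers_isSolvable x) (mem_zpowers x))
    · push_neg at hc
      obtain ⟨g, hg⟩ := hc
      have hx1 : x * x = 1 := mul_eq_one_iff_inv_eq.mpr hx2
      have hy1 : (g * x * g⁻¹) * (g * x * g⁻¹) = 1 := by
        rw [show (g * x * g⁻¹) * (g * x * g⁻¹) = g * (x * x) * g⁻¹ by group, hx1, mul_one,
          mul_inv_cancel]
      have hyR : g * x * g⁻¹ ∉ R := by
        intro h
        have h2 := hR.2.1.conj_mem _ h g⁻¹
        rw [show g⁻¹ * (g * x * g⁻¹) * g⁻¹⁻¹ = x by group] at h2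
        exact hxR h2
      obtain ⟨-, h2⟩ := hdom ⟨g * x * g⁻¹, hyR⟩ (fun h => hg (congrArg Subtype.val h))
      exact h2 (invol_closure_isSolvable hx1 hy1)
  · have hxiR : x⁻¹ ∉ R := fun h => hxR (by simpa using inv_mem h)
    obtain ⟨-, h2⟩ := hdom ⟨x⁻¹, hxiR⟩ (fun h => hx2 (congrArg Subtype.val h))
    apply h2
    have heq : closure ({x, x⁻¹} : Set G) = zpowers x := by
      rw [zpowers_eq_closure]
      apply le_antisymm
      · rw [closure_le]
        rintro g (rfl | rfl)
        · exact subset_closure rfl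
        · exact inv_mem (subset_closure rfl)
      · rw [closure_le]
        rintro g rfl
        exact subset_closure (Set.mem_insert _ _)
    show IsSolvable (closure ({x, x⁻¹} : Set G))
    rw [heq]
    exact zpowers_isSolvable x
end
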